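/- arXiv:0909.5512 — 6 statements merged into one kernel-verified Lean document; each statement's English description precedes it below -/
import Mathlib

section
/- For every natural number n, the central Delannoy number d_{n,n} = sum_{k=0}^n binom(2n-k,k)*binom(2n-2k,n-k) equals P_n(3), where P_n is the n-th Legendre polynomial given by P_n(x) = sum_{j=0}^n binom(n+j,j)*binom(n,n-j)*((x-1)/2)^j. -/
lemma delannoy_term (n k : ℕ) (hk : k ≤ n) :
    (n + k).choose (n - k) * (2 * k).choose k = (n + k).choose k * n.choose (n - k) := by
  have h1 : (n + k).choose (n - k) = (n + k).choose (2 * k) := by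
    rw [← Nat.choose_symm (by omega)]
    congr 1
    omega
  have h2 : (2 * k : ℕ) ≤ n + k := by omega
  have := Nat.choose_mul (n := n + k) (k := 2 * k) (s := k) (by omega)
  rw [h1, this, show n + k - k = n from by omega, show 2 * k - k = k from by omega,
    Nat.choose_symm hk]

/-- the central Delannoy number
`d_{n,n} = ∑_{k=0}^n choose (2n-k) k * choose (2n-2k) (n-k)` equals `P_n(3)`, where
`P_n(x) = ∑_{j=0}^n choose (n+j) j * choose n (n-j) * ((x-1)/2)^j` is the Legendre
polynomial. -/
theorem central_delannoy_eq_legendre_at_three (n : ℕ) :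
    ((∑ k ∈ Finset.range (n + 1),
        (2 * n - k).choose k * (2 * n - 2 * k).choose (n - k) : ℕ) : ℚ) =
      ∑ j ∈ Finset.range (n + 1),
        ((n + j).choose j * n.choose (n - j) : ℚ) * (((3 : ℚ) - 1) / 2) ^ j := by
  have h3 : (((3 : ℚ) - 1) / 2) = 1 := by norm_num
  simp only [h3, one_pow, mul_one]
  push_cast
  rw [← Finset.sum_range_reflect]
  refine Finset.sum_congr rfl fun k hk => ?_
  have hk' : k ≤ n := by
    simp only [Finset.mem_range] at hk; omega
  have e1 : 2 * n - (n + 1 - 1 - k) = n + k := by omega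
  have e2 : 2 * n - 2 * (n + 1 - 1 - k) = 2 * k := by omega
  have e3 : n - (n + 1 - 1 - k) = k := by omega
  have e4 : n + 1 - 1 - k = n - k := by omega
  rw [e1, e2, e3, e4]
  -- goal : (n+k).choose (n-k) * (2k).choose k = (n+k).choose k * n.choose (n-k)
  exact_mod_cast delannoy_term n k hk'
end

section
/- For natural numbers n and alpha, and any complex beta, (x-1)^alpha * P_n^{(alpha,beta)}(2x-1) = sum_{k=0}^{n+alpha} (-1)^(n+alpha-k) * binom(n+alpha,k) * binom(n+beta+k,n) * x^k, where P_n^{(alpha,beta)}(y) = sum_{j=0}^n binom(n+alpha+beta+j,j) * binom(n+alpha,n-j) * ((y-1)/2)^j and binom(n+beta+k,n) denotes the generalized binomial coefficient (beta+k+1)(beta+k+2)...(beta+k+n)/n!. -/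
/-- Generalized binomial coefficient `choose z k = z(z-1)⋯(z-k+1)/k!` for complex `z`. -/
noncomputable def cchoose (z : ℂ) (k : ℕ) : ℂ :=
  (∏ i ∈ Finset.range k, (z - i)) / (k.factorial : ℂ)

lemma cchoose_zero (z : ℂ) : cchoose z 0 = 1 := by simp [cchoose]

lemma cchoose_pascal (z : ℂ) (j : ℕ) :
    cchoose (z + 1) (j + 1) = cchoose z (j + 1) + cchoose z j := by
  unfold cchoose
  have h1 : ((j+1).factorial : ℂ) ≠ 0 := by exact_mod_cast (j+1).factorial_ne_zero
  have h2 : ((j).factorial : ℂ) ≠ 0 := by exact_mod_cast (j).factorial_ne_zero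
  have e1 : ∏ i ∈ Finset.range (j+1), (z + 1 - i)
      = (∏ i ∈ Finset.range j, (z - i)) * (z + 1) := by
    rw [Finset.prod_range_succ']
    congr 1
    · apply Finset.prod_congr rfl
      intro i _
      push_cast
      ring
    · simp
  have e2 : ∏ i ∈ Finset.range (j+1), (z - i)
      = (∏ i ∈ Finset.range j, (z - i)) * (z - j) := Finset.prod_range_succ _ _
  have h3 : ((j : ℂ) + 1) ≠ 0 := Nat.cast_add_one_ne_zero j
  rw [e1, e2, Nat.factorial_succ]
  push_cast
  field_simp
  ring

lemma cchoose_vandermonde (z : ℂ) (m : ℕ) : ∀ j : ℕ,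
    cchoose (z + m) j = ∑ i ∈ Finset.range (j + 1), (m.choose i : ℂ) * cchoose z (j - i) := by
  induction m with
  | zero =>
    intro j
    rw [Finset.sum_eq_single 0]
    · simp
    · intro i _ hi
      rcases Nat.exists_eq_succ_of_ne_zero hi with ⟨i', rfl⟩
      simp
    · simp
  | succ m ih =>
    intro j
    have hz : z + ((m + 1 : ℕ) : ℂ) = (z + m) + 1 := by push_cast; ring
    cases j with
    | zero => simp [hz, cchoose_zero]
    | succ j =>
      rw [hz, cchoose_pascal, ih (j+1), ih j]
      rw [Finset.sum_range_succ' (fun i => ((m+1).choose i : ℂ) * cchoose z (j + 1 - i)) (j+1)]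
      rw [Finset.sum_range_succ' (fun i => ((m).choose i : ℂ) * cchoose z (j + 1 - i)) (j+1)]
      have : ∀ i, ((m+1).choose (i+1) : ℂ) * cchoose z (j + 1 - (i+1))
          = ((m).choose (i+1) : ℂ) * cchoose z (j + 1 - (i+1))
            + ((m).choose i : ℂ) * cchoose z (j - i) := by
        intro i
        rw [Nat.choose_succ_succ']
        push_cast
        ring
      simp only [this]
      rw [Finset.sum_add_distrib]
      simp [Nat.succ_sub_succ]
      ring

lemma binom_B (m r : ℕ) (hr : r ≤ m) (x : ℂ) :
    (m.choose r : ℂ) * x ^ r * (x - 1) ^ (m - r)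
      = ∑ k ∈ Finset.range (m + 1),
          (-1 : ℂ) ^ (m - k) * (m.choose k : ℂ) * (k.choose r : ℂ) * x ^ k := by
  have hsub : Finset.Ico r (m+1) ⊆ Finset.range (m+1) := by
    intro k hk; simp at hk ⊢; omega
  rw [← Finset.sum_subset hsub (by
    intro k hk hk2
    simp at hk hk2
    have : k < r := by omega
    rw [Nat.choose_eq_zero_of_lt this]
    simp)]
  rw [Finset.sum_Ico_eq_sum_range]
  have hmr : m + 1 - r = (m - r) + 1 := by omega
  rw [hmr]
  have step : ∀ t ∈ Finset.range ((m - r) + 1),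
      (-1 : ℂ) ^ (m - (r + t)) * (m.choose (r + t) : ℂ) * ((r + t).choose r : ℂ) * x ^ (r + t)
      = (m.choose r : ℂ) * x ^ r *
          ((m - r).choose t : ℂ) * x ^ t * (-1 : ℂ) ^ ((m - r) - t) := by
    intro t ht
    simp only [Finset.mem_range] at ht
    have h1 : m.choose (r + t) * (r + t).choose r = m.choose r * (m - r).choose t := by
      have := Nat.choose_mul (n := m) (k := r + t) (s := r) (by omega)
      simpa using this
    have h2 : m - (r + t) = (m - r) - t := by omega
    rw [h2, pow_add]
    calc (-1 : ℂ) ^ ((m-r) - t) * (m.choose (r + t) : ℂ) * ((r + t).choose r : ℂ) * (x ^ r * x ^ t)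
        = ((m.choose (r+t) * (r+t).choose r : ℕ) : ℂ) * x ^ r * x ^ t * (-1:ℂ) ^ ((m-r)-t) := by
          push_cast; ring
      _ = _ := by rw [h1]; push_cast; ring
  rw [Finset.sum_congr rfl step]
  have bin : (x - 1) ^ (m - r) = ∑ t ∈ Finset.range ((m - r) + 1),
      ((m - r).choose t : ℂ) * x ^ t * (-1 : ℂ) ^ ((m - r) - t) := by
    rw [show x - 1 = x + (-1 : ℂ) by ring, add_pow]
    exact Finset.sum_congr rfl (fun t _ => by ring)
  rw [bin, Finset.mul_sum]
  exact Finset.sum_congr rfl (fun t _ => by ring)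

lemma pow_expand (M : ℕ) (x : ℂ) :
    x ^ M = ∑ j ∈ Finset.range (M + 1), ((M.choose j) : ℂ) * (x - 1) ^ (M - j) := by
  conv_lhs => rw [show x = 1 + (x - 1) by ring]
  rw [add_pow]
  exact Finset.sum_congr rfl (fun j _ => by rw [one_pow]; ring)

/-- for natural `n`, `α` and complex `β`,
`(x-1)^α * P_n^{(α,β)}(2x-1) = ∑_{k=0}^{n+α} (-1)^(n+α-k) choose (n+α) k *
choose (n+β+k) n * x^k`, where
`P_n^{(α,β)}(y) = ∑_{j=0}^n choose (n+α+β+j) j * choose (n+α) (n-j) * ((y-1)/2)^j`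
with generalized binomial coefficients for the complex top arguments. -/
theorem shifted_jacobi_formula (n α : ℕ) (β x : ℂ) :
    (x - 1) ^ α *
      (∑ j ∈ Finset.range (n + 1),
        cchoose ((n : ℂ) + α + β + j) j * ((n + α).choose (n - j) : ℂ) *
          (((2 * x - 1) - 1) / 2) ^ j) =
      ∑ k ∈ Finset.range (n + α + 1),
        (-1) ^ (n + α - k) * ((n + α).choose k : ℂ) *
          cchoose ((n : ℂ) + β + k) n * x ^ k := by
  calc (x - 1) ^ α *
      (∑ j ∈ Finset.range (n + 1),
        cchoose ((n : ℂ) + α + β + j) j * ((n + α).choose (n - j) : ℂ) *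
          (((2 * x - 1) - 1) / 2) ^ j)
      = ∑ j ∈ Finset.range (n + 1),
          (cchoose ((n : ℂ) + α + β + j) j * ((n + α).choose (n - j) : ℂ)) *
            (x - 1) ^ (α + j) := by
        rw [Finset.mul_sum]
        refine Finset.sum_congr rfl fun j _ => ?_
        rw [show ((2 * x - 1) - 1) / 2 = x - 1 by ring, pow_add]
        ring
    _ = ∑ j ∈ Finset.range (n + 1), ∑ s ∈ Finset.range (n + 1),
          ((n + α).choose (n - s) : ℂ) * ((n - s).choose (n - j) : ℂ) *
            cchoose ((n : ℂ) + β) s * (x - 1) ^ (α + j) := by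
        refine Finset.sum_congr rfl fun j hj => ?_
        simp only [Finset.mem_range] at hj
        have hjn : j ≤ n := by omega
        rw [← Finset.sum_mul]
        congr 1
        have h0 : (n : ℂ) + α + β + j = ((n : ℂ) + β) + ((α + j : ℕ) : ℂ) := by
          push_cast; ring
        rw [h0, cchoose_vandermonde]
        have refl1 : ∑ i ∈ Finset.range (j + 1),
            ((α + j).choose i : ℂ) * cchoose ((n : ℂ) + β) (j - i)
            = ∑ s ∈ Finset.range (j + 1),
              ((α + j).choose (j - s) : ℂ) * cchoose ((n : ℂ) + β) s := by
          rw [← Finset.sum_range_reflect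
            (fun s => ((α + j).choose (j - s) : ℂ) * cchoose ((n : ℂ) + β) s) (j+1)]
          refine Finset.sum_congr rfl fun i hi => ?_
          simp only [Finset.mem_range] at hi
          have e1 : j + 1 - 1 - i = j - i := by omega
          have e2 : j - (j - i) = i := by omega
          rw [e1, e2]
        rw [refl1, Finset.sum_mul]
        have hstep : ∀ s ∈ Finset.range (j + 1),
            ((α + j).choose (j - s) : ℂ) * cchoose ((n : ℂ) + β) s *
              ((n + α).choose (n - j) : ℂ)
            = ((n + α).choose (n - s) : ℂ) * ((n - s).choose (n - j) : ℂ) *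
                cchoose ((n : ℂ) + β) s := by
          intro s hs
          simp only [Finset.mem_range] at hs
          have hsj : s ≤ j := by omega
          have hnat : (n + α).choose (n - s) * (n - s).choose (n - j)
              = (n + α).choose (n - j) * (α + j).choose (j - s) := by
            have := Nat.choose_mul (n := n + α) (k := n - s) (s := n - j)
              (by omega)
            rwa [show n + α - (n - j) = α + j by omega,
              show n - s - (n - j) = j - s by omega] at this
          calc ((α + j).choose (j - s) : ℂ) * cchoose ((n : ℂ) + β) s *
                ((n + α).choose (n - j) : ℂ)
              = (((n + α).choose (n - j) * (α + j).choose (j - s) : ℕ) : ℂ) *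
                  cchoose ((n : ℂ) + β) s := by push_cast; ring
            _ = _ := by rw [← hnat]; push_cast; ring
        rw [Finset.sum_congr rfl hstep]
        refine Finset.sum_subset (by intro s hs; simp at hs ⊢; omega) ?_
        intro s hs hs2
        simp only [Finset.mem_range] at hs hs2
        have : n - s < n - j := by omega
        rw [Nat.choose_eq_zero_of_lt this]
        simp
    _ = ∑ s ∈ Finset.range (n + 1), ∑ j ∈ Finset.range (n + 1),
          ((n + α).choose (n - s) : ℂ) * ((n - s).choose (n - j) : ℂ) *
            cchoose ((n : ℂ) + β) s * (x - 1) ^ (α + j) := Finset.sum_comm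
    _ = ∑ s ∈ Finset.range (n + 1), cchoose ((n : ℂ) + β) s *
          (((n + α).choose (n - s) : ℂ) * x ^ (n - s) * (x - 1) ^ ((n + α) - (n - s))) := by
        refine Finset.sum_congr rfl fun s hs => ?_
        simp only [Finset.mem_range] at hs
        have hsn : s ≤ n := by omega
        have inner : ∑ j ∈ Finset.range (n + 1),
            ((n - s).choose (n - j) : ℂ) * (x - 1) ^ (α + j)
            = (x - 1) ^ (α + s) * x ^ (n - s) := by
          have r1 : ∑ j ∈ Finset.range (n + 1),
              ((n - s).choose (n - j) : ℂ) * (x - 1) ^ (α + j)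
              = ∑ j ∈ Finset.range (n + 1),
                ((n - s).choose j : ℂ) * (x - 1) ^ (α + (n - j)) := by
            rw [← Finset.sum_range_reflect
              (fun j => ((n - s).choose j : ℂ) * (x - 1) ^ (α + (n - j))) (n+1)]
            refine Finset.sum_congr rfl fun j hj => ?_
            simp only [Finset.mem_range] at hj
            have e1 : n + 1 - 1 - j = n - j := by omega
            have e2 : n - (n - j) = j := by omega
            rw [e1, e2]
          rw [r1]
          rw [← Finset.sum_subset (show Finset.range ((n - s) + 1) ⊆ Finset.range (n + 1)
              by intro j hj; simp at hj ⊢; omega) (by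
            intro j hj hj2
            simp only [Finset.mem_range] at hj hj2
            rw [Nat.choose_eq_zero_of_lt (show n - s < j by omega)]
            simp)]
          rw [pow_expand (n - s) x, Finset.mul_sum]
          refine Finset.sum_congr rfl fun j hj => ?_
          simp only [Finset.mem_range] at hj
          rw [show α + (n - j) = (α + s) + ((n - s) - j) by omega, pow_add]
          ring
        calc ∑ j ∈ Finset.range (n + 1),
              ((n + α).choose (n - s) : ℂ) * ((n - s).choose (n - j) : ℂ) *
                cchoose ((n : ℂ) + β) s * (x - 1) ^ (α + j)
            = ((n + α).choose (n - s) : ℂ) * cchoose ((n : ℂ) + β) s *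
                ∑ j ∈ Finset.range (n + 1),
                  ((n - s).choose (n - j) : ℂ) * (x - 1) ^ (α + j) := by
              rw [Finset.mul_sum]
              exact Finset.sum_congr rfl fun j _ => by ring
          _ = _ := by
              rw [inner, show (n + α) - (n - s) = α + s by omega]
              ring
    _ = ∑ s ∈ Finset.range (n + 1), cchoose ((n : ℂ) + β) s *
          ∑ k ∈ Finset.range (n + α + 1),
            (-1 : ℂ) ^ (n + α - k) * ((n + α).choose k : ℂ) * (k.choose (n - s) : ℂ) * x ^ k := by
        refine Finset.sum_congr rfl fun s hs => ?_
        simp only [Finset.mem_range] at hs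
        rw [binom_B (n + α) (n - s) (by omega) x]
    _ = ∑ k ∈ Finset.range (n + α + 1),
        (-1) ^ (n + α - k) * ((n + α).choose k : ℂ) *
          cchoose ((n : ℂ) + β + k) n * x ^ k := by
        simp only [Finset.mul_sum]
        rw [Finset.sum_comm]
        refine Finset.sum_congr rfl fun k hk => ?_
        have hv : cchoose ((n : ℂ) + β + k) n
            = ∑ i ∈ Finset.range (n + 1), (k.choose i : ℂ) * cchoose ((n : ℂ) + β) (n - i) := by
          have h0 : (n : ℂ) + β + k = ((n : ℂ) + β) + ((k : ℕ) : ℂ) := by ring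
          rw [h0, cchoose_vandermonde]
        have refl2 : ∑ i ∈ Finset.range (n + 1), (k.choose i : ℂ) * cchoose ((n : ℂ) + β) (n - i)
            = ∑ s ∈ Finset.range (n + 1), (k.choose (n - s) : ℂ) * cchoose ((n : ℂ) + β) s := by
          rw [← Finset.sum_range_reflect
            (fun s => (k.choose (n - s) : ℂ) * cchoose ((n : ℂ) + β) s) (n+1)]
          refine Finset.sum_congr rfl fun i hi => ?_
          simp only [Finset.mem_range] at hi
          have e1 : n + 1 - 1 - i = n - i := by omega
          have e2 : n - (n - i) = i := by omega
          rw [e1, e2]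
        rw [hv, refl2, Finset.mul_sum, Finset.sum_mul]
        exact Finset.sum_congr rfl fun s _ => by ring
end

section
/- For natural numbers m, n, beta with m < n, the alternating sum sum_{k=0}^n (-1)^k * binom(n+beta,k) * binom(n,k) * k! * (n+m+beta-k)! equals zero. -/
open Finset Nat fwdDiff

private lemma aux_fact (m n β k : ℕ) (hk : k ≤ n) :
    (n + β).choose k * k.factorial * (n + m + β - k).factorial
      = (n + β).factorial * (m.factorial * (n + m + β - k).choose m) := by
  have h1 : k ≤ n + β := hk.trans (Nat.le_add_right _ _)
  have h2 : m ≤ n + m + β - k := by omega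
  have h3 : n + m + β - k - m = n + β - k := by omega
  have e1 := Nat.choose_mul_factorial_mul_factorial h1
  have e2 := Nat.choose_mul_factorial_mul_factorial h2
  rw [h3] at e2
  apply Nat.eq_of_mul_eq_mul_right (Nat.factorial_pos (n + β - k))
  calc (n + β).choose k * k.factorial * (n + m + β - k).factorial * (n + β - k).factorial
      = ((n + β).choose k * k.factorial * (n + β - k).factorial) * (n + m + β - k).factorial := by
        ring
    _ = (n + β).factorial * (n + m + β - k).factorial := by rw [e1]
    _ = (n + β).factorial * ((n + m + β - k).choose m * m.factorial * (n + β - k).factorial) := by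
        rw [e2]
    _ = _ := by ring

private lemma aux_diff (m n β : ℕ) (h : m < n) :
    (fwdDiff (1:ℕ))^[n] (fun x : ℕ => (((x + (m + β)).choose m : ℕ) : ℤ)) 0 = 0 := by
  have hf : (fun x : ℕ => (((x + (m + β)).choose m : ℕ) : ℤ))
      = ∑ p ∈ Finset.HasAntidiagonal.antidiagonal m,
          (((m + β).choose p.2 : ℤ) • fun x : ℕ => ((x.choose p.1 : ℕ) : ℤ)) := by
    funext x
    simp only [Finset.sum_apply, Pi.smul_apply, smul_eq_mul]
    rw [Nat.add_choose_eq]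
    push_cast
    exact Finset.sum_congr rfl fun p _ => by ring
  rw [hf]
  rw [fwdDiff_iter_finset_sum]
  rw [Finset.sum_apply]
  refine Finset.sum_eq_zero fun p hp => ?_
  have hp1 : p.1 ≤ m := by
    have := Finset.HasAntidiagonal.mem_antidiagonal.mp hp; omega
  rw [fwdDiff_iter_const_smul, Pi.smul_apply, fwdDiff_iter_choose_zero, smul_eq_mul]
  rw [if_neg (by omega)]
  ring

private lemma aux_sum (m n β : ℕ) (h : m < n) :
    (∑ k ∈ Finset.range (n + 1),
        (-1 : ℤ) ^ k * (n.choose k : ℤ) * ((n + m + β - k).choose m : ℤ)) = 0 := by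
  have key := fwdDiff_iter_eq_sum_shift (1 : ℕ)
      (fun x : ℕ => (((x + (m + β)).choose m : ℕ) : ℤ)) n 0
  rw [← Finset.sum_range_reflect]
  calc (∑ k ∈ Finset.range (n + 1),
        (-1 : ℤ) ^ (n - k) * (n.choose (n - k) : ℤ) * ((n + m + β - (n - k)).choose m : ℤ))
      = ∑ k ∈ Finset.range (n + 1),
        (((-1 : ℤ) ^ (n - k) * (n.choose k : ℤ)) •
          (((0 + k • 1 + (m + β)).choose m : ℕ) : ℤ)) := by
        refine Finset.sum_congr rfl fun k hk => ?_
        have hk' : k ≤ n := Nat.lt_succ_iff.mp (Finset.mem_range.mp hk)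
        have h1 : n + m + β - (n - k) = k + (m + β) := by omega
        rw [Nat.choose_symm hk', h1]
        simp only [smul_eq_mul, zero_add, smul_eq_mul, mul_one]
    _ = (fwdDiff (1:ℕ))^[n] (fun x : ℕ => (((x + (m + β)).choose m : ℕ) : ℤ)) 0 := key.symm
    _ = 0 := aux_diff m n β h

/-- for natural numbers `m < n` and `β`,
`∑_{k=0}^n (-1)^k * choose (n+β) k * choose n k * k! * (n+m+β-k)! = 0`. -/
theorem orthogonality_alternating_sum (m n β : ℕ) (h : m < n) :
    (∑ k ∈ Finset.range (n + 1),
        (-1 : ℤ) ^ k * ((n + β).choose k : ℤ) * (n.choose k : ℤ) *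
          (k.factorial : ℤ) * ((n + m + β - k).factorial : ℤ)) = 0 := by
  have step : ∀ k ∈ Finset.range (n + 1),
      (-1 : ℤ) ^ k * ((n + β).choose k : ℤ) * (n.choose k : ℤ) *
          (k.factorial : ℤ) * ((n + m + β - k).factorial : ℤ)
        = (((n + β).factorial : ℤ) * (m.factorial : ℤ)) *
            ((-1 : ℤ) ^ k * (n.choose k : ℤ) * ((n + m + β - k).choose m : ℤ)) := by
    intro k hk
    have hk' : k ≤ n := Nat.lt_succ_iff.mp (Finset.mem_range.mp hk)
    have e := aux_fact m n β k hk'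
    have e' : ((n + β).choose k * k.factorial * (n + m + β - k).factorial : ℤ)
        = ((n + β).factorial * (m.factorial * (n + m + β - k).choose m) : ℤ) := by
      exact_mod_cast congrArg (fun x : ℕ => (x : ℤ)) e
    calc (-1 : ℤ) ^ k * ((n + β).choose k : ℤ) * (n.choose k : ℤ) *
          (k.factorial : ℤ) * ((n + m + β - k).factorial : ℤ)
        = ((-1 : ℤ) ^ k * (n.choose k : ℤ)) *
            (((n + β).choose k : ℤ) * (k.factorial : ℤ) * ((n + m + β - k).factorial : ℤ)) := by
          ring
      _ = ((-1 : ℤ) ^ k * (n.choose k : ℤ)) *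
            (((n + β).factorial : ℤ) * ((m.factorial : ℤ) * ((n + m + β - k).choose m : ℤ))) := by
          rw [e']
      _ = _ := by ring
  rw [Finset.sum_congr rfl step, ← Finset.mul_sum, aux_sum m n β h, mul_zero]
end

section
/- For natural numbers m, n, beta with m < n <= (beta-2)/2, sum_{j=0}^n (-1)^j * binom(n,j) * binom(m+j,m) * binom(beta-2-m-j, n-m-1) = 0. -/
open Finset Polynomial fwdDiff

private lemma myFwdDiff_eval (p : ℚ[X]) :
    Δ_[(1:ℕ)] (fun x : ℕ => p.eval (x : ℚ)) =
      fun x : ℕ => (p.comp (X + C 1) - p).eval (x : ℚ) := by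
  funext x
  simp only [fwdDiff, Polynomial.eval_sub, Polynomial.eval_comp, Polynomial.eval_add,
    Polynomial.eval_X, Polynomial.eval_C]
  push_cast
  ring

private lemma myDegree_comp_sub_lt (p : ℚ[X]) (hp0 : p ≠ 0) :
    (p.comp (X + C 1) - p).degree < p.degree := by
  have hq1 : (X + C (1:ℚ)).natDegree = 1 := Polynomial.natDegree_X_add_C 1
  have hlc : (p.comp (X + C 1)).leadingCoeff = p.leadingCoeff := by
    rw [Polynomial.leadingCoeff_comp (by rw [hq1]; norm_num),
      Polynomial.leadingCoeff_X_add_C, one_pow, mul_one]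
  have hc0 : p.comp (X + C 1) ≠ 0 := by
    intro h
    apply hp0
    rw [← Polynomial.leadingCoeff_eq_zero, ← hlc, h, Polynomial.leadingCoeff_zero]
  have hdeg : (p.comp (X + C 1)).degree = p.degree := by
    rw [Polynomial.degree_eq_natDegree hc0, Polynomial.degree_eq_natDegree hp0,
      Polynomial.natDegree_comp, hq1, mul_one]
  have := Polynomial.degree_sub_lt hdeg hc0 hlc
  rwa [hdeg] at this

private lemma myFwdDiff_iter_poly_zero (k : ℕ) (p : ℚ[X]) (hp : p.degree < (k : ℕ)) :
    (fwdDiff (1:ℕ))^[k] (fun x : ℕ => p.eval (x : ℚ)) = 0 := by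
  induction k generalizing p with
  | zero =>
    have h0 : p = 0 := by
      rw [← Polynomial.degree_eq_bot]
      simpa using hp
    funext x
    simp [h0]
  | succ k ih =>
    rw [Function.iterate_succ_apply, myFwdDiff_eval]
    apply ih
    by_cases h0 : p = 0
    · simp only [h0, Polynomial.zero_comp, sub_zero, Polynomial.degree_zero]
      exact_mod_cast WithBot.bot_lt_coe k
    · refine lt_of_lt_of_le (myDegree_comp_sub_lt p h0) ?_
      rw [Polynomial.degree_eq_natDegree h0] at hp ⊢
      have : p.natDegree < k + 1 := by exact_mod_cast hp
      exact_mod_cast Nat.lt_succ_iff.mp this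

/-- for natural numbers `m < n ≤ (β-2)/2`,
`∑_{j=0}^n (-1)^j * choose n j * choose (m+j) m * choose (β-2-m-j) (n-m-1) = 0`. -/
theorem romanovski_orthogonality_sum (m n β : ℕ) (hmn : m < n) (hnβ : 2 * n + 2 ≤ β) :
    (∑ j ∈ Finset.range (n + 1),
        (-1 : ℤ) ^ j * (n.choose j : ℤ) * ((m + j).choose m : ℤ) *
          ((β - 2 - m - j).choose (n - m - 1) : ℤ)) = 0 := by
  set r := n - m - 1 with hr
  set N := β - 2 - m with hN
  -- the interpolating polynomial
  set p : ℚ[X] := Polynomial.C ((m.factorial : ℚ)⁻¹ * (r.factorial : ℚ)⁻¹) *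
      ((∏ i ∈ range m, (Polynomial.C ((m : ℚ) - i) + X)) *
        (∏ i ∈ range r, (Polynomial.C ((N : ℚ) - i) - X))) with hp
  have hm0 : (m.factorial : ℚ) ≠ 0 := by exact_mod_cast m.factorial_ne_zero
  have hr0 : (r.factorial : ℚ) ≠ 0 := by exact_mod_cast r.factorial_ne_zero
  -- p interpolates the product of binomial coefficients on [0, n]
  have key : ∀ j ≤ n, p.eval (j : ℚ) =
      ((m + j).choose m : ℚ) * ((N - j).choose r : ℚ) := by
    intro j hj
    have e1 : ((m + j).descFactorial m : ℚ) = ∏ i ∈ range m, ((m : ℚ) - i + j) := by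
      rw [Nat.descFactorial_eq_prod_range]
      push_cast [Nat.cast_prod]
      refine Finset.prod_congr rfl fun i hi => ?_
      have hi' : i < m := Finset.mem_range.mp hi
      rw [Nat.cast_sub (by omega)]
      push_cast
      ring
    have e2 : ((N - j).descFactorial r : ℚ) = ∏ i ∈ range r, ((N : ℚ) - i - j) := by
      rw [Nat.descFactorial_eq_prod_range]
      push_cast [Nat.cast_prod]
      refine Finset.prod_congr rfl fun i hi => ?_
      have hi' : i < r := Finset.mem_range.mp hi
      have h1 : j + i ≤ N := by omega
      rw [Nat.cast_sub (by omega), Nat.cast_sub (by omega)]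
      ring
    have d1 : ((m + j).descFactorial m : ℚ) = (m.factorial : ℚ) * ((m + j).choose m : ℚ) := by
      exact_mod_cast congrArg (Nat.cast : ℕ → ℚ) (Nat.descFactorial_eq_factorial_mul_choose _ _)
    have d2 : ((N - j).descFactorial r : ℚ) = (r.factorial : ℚ) * ((N - j).choose r : ℚ) := by
      exact_mod_cast congrArg (Nat.cast : ℕ → ℚ) (Nat.descFactorial_eq_factorial_mul_choose _ _)
    have hev : p.eval (j : ℚ) = ((m.factorial : ℚ)⁻¹ * (r.factorial : ℚ)⁻¹) *
        ((∏ i ∈ range m, ((m : ℚ) - i + j)) * (∏ i ∈ range r, ((N : ℚ) - i - j))) := by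
      simp [hp, Polynomial.eval_prod]
    rw [hev, ← e1, ← e2, d1, d2]
    field_simp
  -- degree bound
  have hdeg : p.degree < (n : ℕ) := by
    have hb1 : ∀ i ∈ range m, (Polynomial.C ((m : ℚ) - i) + X).natDegree ≤ 1 := by
      intro i _
      rw [add_comm]
      exact le_of_eq (Polynomial.natDegree_X_add_C _)
    have hb2 : ∀ i ∈ range r, (Polynomial.C ((N : ℚ) - i) - X).natDegree ≤ 1 := by
      intro i _
      have h : Polynomial.C ((N : ℚ) - i) - X = -(X - Polynomial.C ((N : ℚ) - i)) := by ring
      rw [h, Polynomial.natDegree_neg, Polynomial.natDegree_X_sub_C]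
    have h1 : (∏ i ∈ range m, (Polynomial.C ((m : ℚ) - i) + X)).natDegree ≤ m := by
      refine le_trans (Polynomial.natDegree_prod_le _ _) (le_trans (Finset.sum_le_sum hb1) ?_)
      simp
    have h2 : (∏ i ∈ range r, (Polynomial.C ((N : ℚ) - i) - X)).natDegree ≤ r := by
      refine le_trans (Polynomial.natDegree_prod_le _ _) (le_trans (Finset.sum_le_sum hb2) ?_)
      simp
    have h3 : p.natDegree ≤ 0 + (m + r) :=
      le_trans Polynomial.natDegree_mul_le
        (add_le_add (le_of_eq (Polynomial.natDegree_C _))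
          (le_trans Polynomial.natDegree_mul_le (add_le_add h1 h2)))
    have hlt : p.natDegree < n := by omega
    exact lt_of_le_of_lt Polynomial.degree_le_natDegree (by exact_mod_cast hlt)
  -- the n-th forward difference vanishes
  have hzero := myFwdDiff_iter_poly_zero n p hdeg
  have hshift := fwdDiff_iter_eq_sum_shift (1 : ℕ) (fun x : ℕ => p.eval (x : ℚ)) n 0
  rw [hzero] at hshift
  simp only [Pi.zero_apply, smul_eq_mul, mul_one, zero_add, zsmul_eq_mul] at hshift
  -- the alternating sum over ℚ vanishes
  have hQ : ∑ j ∈ range (n + 1), (-1 : ℚ) ^ j * (n.choose j : ℚ) * p.eval (j : ℚ) = 0 := by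
    have : ∑ j ∈ range (n + 1), (-1 : ℚ) ^ j * (n.choose j : ℚ) * p.eval (j : ℚ)
        = (-1 : ℚ) ^ n * ∑ k ∈ range (n + 1),
            (((-1 : ℤ) ^ (n - k) * (n.choose k : ℤ) : ℤ) : ℚ) * p.eval (k : ℚ) := by
      rw [Finset.mul_sum]
      refine Finset.sum_congr rfl fun k hk => ?_
      have hk' : k ≤ n := Nat.lt_succ_iff.mp (Finset.mem_range.mp hk)
      have hsq : ((-1 : ℚ)) ^ (n - k) * (-1 : ℚ) ^ (n - k) = 1 := by
        rw [← pow_add]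
        exact Even.neg_one_pow ⟨n - k, by ring⟩
      have h1 : ((-1 : ℚ)) ^ (n - k) * (-1 : ℚ) ^ k = (-1 : ℚ) ^ n := by
        rw [← pow_add, Nat.sub_add_cancel hk']
      push_cast
      rw [← h1]
      linear_combination (-1 * (-1 : ℚ) ^ k * (n.choose k : ℚ) * p.eval (k : ℚ)) * hsq
    rw [this, ← hshift, mul_zero]
  -- cast the integer sum to ℚ
  have hcast : ((∑ j ∈ Finset.range (n + 1),
      (-1 : ℤ) ^ j * (n.choose j : ℤ) * ((m + j).choose m : ℤ) *
        ((N - j).choose r : ℤ) : ℤ) : ℚ) = 0 := by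
    push_cast
    rw [← hQ]
    refine Finset.sum_congr rfl fun j hj => ?_
    have hj' : j ≤ n := Nat.lt_succ_iff.mp (Finset.mem_range.mp hj)
    rw [key j hj']
    ring
  exact_mod_cast hcast
end

section
/- For natural numbers m, n, beta with m < n, the equality (n+m+beta+1)! * integral from 0 to 1 of x^(m+beta) * P_n^{(0,beta)}(2x-1) dx = sum_{k=0}^n (-1)^k * binom(n+beta,k) * binom(n,k) * k! * (n+m+beta-k)! holds; in particular the integral vanishes for m < n. -/
open Finset Polynomial fwdDiff


lemma fwdDiff_iter_zero_fun (n : ℕ) :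
    (fwdDiff (1:ℝ))^[n] (fun _ : ℝ => (0:ℝ)) = fun _ => 0 := by
  induction n with
  | zero => rfl
  | succ n ih => rw [Function.iterate_succ_apply', ih]; exact fwdDiff_const 1 0

lemma fwdDiff_iter_eval_eq_zero (n : ℕ) (p : Polynomial ℝ) (hp : p.natDegree < n) :
    (fwdDiff (1:ℝ))^[n] (fun x : ℝ => p.eval x) = fun _ => 0 := by
  induction n generalizing p with
  | zero => omega
  | succ n ih =>
    rw [Function.iterate_succ_apply]
    have hd : (fwdDiff (1:ℝ)) (fun x : ℝ => p.eval x)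
        = fun x : ℝ => (p.comp (X + C 1) - p).eval x := by
      funext x
      simp [fwdDiff, eval_comp]
    rw [hd]
    by_cases h0 : p.natDegree = 0
    · obtain ⟨c, rfl⟩ := natDegree_eq_zero.mp h0
      have : (C c).comp (X + C 1) - C c = 0 := by simp
      rw [this]
      simpa using fwdDiff_iter_zero_fun n
    · set q := p.comp (X + C 1) - p with hq
      apply ih
      have hp0 : p ≠ 0 := fun hh => h0 (by simp [hh])
      have hcomp0 : p.comp (X + C 1) ≠ 0 := fun hh => by
        apply h0
        have h2 := natDegree_comp (p := p) (q := X + C (1:ℝ))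
        rw [hh, natDegree_zero, natDegree_X_add_C, mul_one] at h2
        exact h2.symm
      have hdeg : (p.comp (X + C 1)).degree = p.degree := by
        rw [degree_eq_natDegree hcomp0, degree_eq_natDegree hp0, natDegree_comp,
          natDegree_X_add_C, mul_one]
      have hlc : (p.comp (X + C 1)).leadingCoeff = p.leadingCoeff := by
        rw [leadingCoeff_comp (by rw [natDegree_X_add_C]; norm_num)]
        rw [leadingCoeff_X_add_C, one_pow, mul_one]
      have hlt : q.degree < p.degree := by
        have := degree_sub_lt hdeg hcomp0 hlc
        rwa [hdeg] at this
      by_cases hq0 : q = 0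
      · have h1 := Nat.pos_of_ne_zero h0
        rw [hq0, natDegree_zero]
        omega
      · have := natDegree_lt_natDegree hq0 hlt
        omega

lemma alt_sum_eval_eq_zero (n : ℕ) (p : Polynomial ℝ) (hp : p.natDegree < n) :
    ∑ k ∈ Finset.range (n + 1), (-1:ℝ)^(n-k) * (n.choose k : ℝ) * p.eval (k:ℝ) = 0 := by
  have h := fwdDiff_iter_eq_sum_shift (1:ℝ) (fun x : ℝ => p.eval x) n 0
  rw [fwdDiff_iter_eval_eq_zero n p hp] at h
  rw [show (∑ k ∈ Finset.range (n + 1), (-1:ℝ)^(n-k) * (n.choose k : ℝ) * p.eval (k:ℝ))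
      = ∑ k ∈ Finset.range (n + 1),
        (((-1:ℤ)^(n-k) * (n.choose k : ℤ)) • p.eval ((0:ℝ) + k • (1:ℝ))) from
    Finset.sum_congr rfl fun k _ => by push_cast [zsmul_eq_mul, smul_eq_mul]; ring]
  exact h.symm

lemma fact_prod_icc (a m : ℕ) :
    a.factorial * ∏ i ∈ Finset.Icc 1 m, (a + i) = (m + a).factorial := by
  induction m with
  | zero => simp
  | succ m ih =>
    rw [Finset.prod_Icc_succ_top (Nat.succ_le_succ (Nat.zero_le m)), ← mul_assoc, ih]
    have : m + 1 + a = (m + a) + 1 := by omega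
    rw [this, Nat.factorial_succ]
    ring

lemma choose_mul_fact_eq_prod (n β k : ℕ) :
    (n + β + k).choose n * n.factorial = ∏ i ∈ Finset.Icc 1 n, (β + k + i) := by
  have h1 := fact_prod_icc (β + k) n
  have h2 := Nat.choose_mul_factorial_mul_factorial (show n ≤ n + β + k by omega)
  have h3 : n + β + k - n = β + k := by omega
  rw [h3] at h2
  have h4 : n + (β + k) = n + β + k := by omega
  rw [h4] at h1
  apply Nat.eq_of_mul_eq_mul_right (Nat.factorial_pos (β + k))
  rw [h2, mul_comm _ ((β+k).factorial), h1]

section main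
variable (m n β : ℕ)

-- The polynomial whose evaluation at k gives C(n+β+k,n)/(m+β+k+1) (up to setup)
noncomputable def Pja : Polynomial ℝ :=
  Polynomial.C ((n.factorial : ℝ)⁻¹) *
    ∏ i ∈ (Finset.Icc 1 n).erase (m + 1), (Polynomial.X + Polynomial.C ((β + i : ℕ) : ℝ))

lemma Pja_natDegree_lt (h : m < n) : (Pja m n β).natDegree < n := by
  have hmem : m + 1 ∈ Finset.Icc 1 n := Finset.mem_Icc.mpr (by omega)
  have h1 : (Pja m n β).natDegree ≤ 0 + (∏ i ∈ (Finset.Icc 1 n).erase (m + 1),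
      (Polynomial.X + Polynomial.C ((β + i : ℕ) : ℝ))).natDegree := by
    refine le_trans (natDegree_mul_le) ?_
    simp [natDegree_C]
  have h2 : (∏ i ∈ (Finset.Icc 1 n).erase (m + 1),
      (Polynomial.X + Polynomial.C ((β + i : ℕ) : ℝ))).natDegree ≤
      ∑ i ∈ (Finset.Icc 1 n).erase (m + 1), 1 := by
    refine le_trans (natDegree_prod_le _ _) ?_
    exact Finset.sum_le_sum fun i _ => le_of_eq (natDegree_X_add_C _)
  have h3 : ∑ i ∈ (Finset.Icc 1 n).erase (m + 1), (1:ℕ)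
      = ((Finset.Icc 1 n).erase (m + 1)).card := by simp
  have h4 : ((Finset.Icc 1 n).erase (m + 1)).card = n - 1 := by
    rw [Finset.card_erase_of_mem hmem, Nat.card_Icc]; omega
  omega

lemma Pja_eval (h : m < n) (k : ℕ) :
    ((n + β + k).choose n : ℝ) = (((m + β + k : ℕ) : ℝ) + 1) * (Pja m n β).eval (k : ℝ) := by
  have hmem : m + 1 ∈ Finset.Icc 1 n := Finset.mem_Icc.mpr (by omega)
  have hnat := choose_mul_fact_eq_prod n β k
  have hprod : (∏ i ∈ Finset.Icc 1 n, (β + k + i) : ℕ)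
      = (β + k + (m+1)) * ∏ i ∈ (Finset.Icc 1 n).erase (m+1), (β + k + i) :=
    (Finset.mul_prod_erase _ _ hmem).symm
  have heval : (Pja m n β).eval (k : ℝ)
      = (n.factorial : ℝ)⁻¹ * ∏ i ∈ (Finset.Icc 1 n).erase (m+1), ((β + k + i : ℕ) : ℝ) := by
    simp only [Pja, eval_mul, eval_C, eval_prod, eval_add, eval_X]
    congr 1
    refine Finset.prod_congr rfl fun i _ => ?_
    push_cast
    ring
  rw [heval]
  have hfac : (n.factorial : ℝ) ≠ 0 := Nat.cast_ne_zero.mpr (Nat.factorial_ne_zero n)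
  have hcast : ((n + β + k).choose n : ℝ) * (n.factorial : ℝ)
      = (((β + k + (m+1) : ℕ)) : ℝ) * ∏ i ∈ (Finset.Icc 1 n).erase (m+1), ((β + k + i : ℕ) : ℝ) := by
    rw [← Nat.cast_mul, hnat, hprod]
    push_cast [Finset.prod_congr rfl]
    ring
  field_simp
  rw [hcast]
  push_cast
  ring

noncomputable def Qja : Polynomial ℝ :=
  Polynomial.C (((n + β).factorial : ℝ)) *
    ∏ i ∈ Finset.Icc 1 m, (Polynomial.C ((n + β + i : ℕ) : ℝ) - Polynomial.X)

lemma Qja_natDegree_lt (h : m < n) : (Qja m n β).natDegree < n := by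
  have h1 : (Qja m n β).natDegree ≤ 0 + (∏ i ∈ Finset.Icc 1 m,
      (Polynomial.C ((n + β + i : ℕ) : ℝ) - Polynomial.X)).natDegree := by
    refine le_trans (natDegree_mul_le) ?_
    simp [natDegree_C]
  have h2 : (∏ i ∈ Finset.Icc 1 m,
      (Polynomial.C ((n + β + i : ℕ) : ℝ) - Polynomial.X)).natDegree ≤
      ∑ i ∈ Finset.Icc 1 m, 1 := by
    refine le_trans (natDegree_prod_le _ _) ?_
    refine Finset.sum_le_sum fun i _ => ?_
    refine le_trans (natDegree_sub_le _ _) ?_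
    rw [natDegree_C, natDegree_X]
    norm_num
  have h3 : ∑ i ∈ Finset.Icc 1 m, (1:ℕ) = m := by simp
  omega

lemma Qja_eval (h : m < n) (k : ℕ) (hk : k ≤ n) :
    ((n + β).choose k : ℝ) * (k.factorial : ℝ) * ((n + m + β - k).factorial : ℝ)
      = (Qja m n β).eval (k : ℝ) := by
  have hk' : k ≤ n + β := by omega
  have h1 := fact_prod_icc (n + β - k) m
  have h2 := Nat.choose_mul_factorial_mul_factorial hk'
  have h3 : m + (n + β - k) = n + m + β - k := by omega
  rw [h3] at h1
  have hnat : (n + β).choose k * k.factorial * (n + m + β - k).factorial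
      = (n + β).factorial * ∏ i ∈ Finset.Icc 1 m, (n + β - k + i) := by
    calc (n + β).choose k * k.factorial * (n + m + β - k).factorial
        = (n + β).choose k * k.factorial *
            ((n + β - k).factorial * ∏ i ∈ Finset.Icc 1 m, (n + β - k + i)) := by rw [h1]
      _ = ((n + β).choose k * k.factorial * (n + β - k).factorial) *
            ∏ i ∈ Finset.Icc 1 m, (n + β - k + i) := by ring
      _ = (n + β).factorial * ∏ i ∈ Finset.Icc 1 m, (n + β - k + i) := by rw [h2]
  have heval : (Qja m n β).eval (k : ℝ)
      = ((n + β).factorial : ℝ) * ∏ i ∈ Finset.Icc 1 m, ((n + β - k + i : ℕ) : ℝ) := by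
    simp only [Qja, eval_mul, eval_C, eval_prod, eval_sub, eval_X]
    congr 1
    refine Finset.prod_congr rfl fun i _ => ?_
    have : ((n + β - k + i : ℕ) : ℝ) = ((n + β : ℕ) : ℝ) - (k : ℝ) + (i : ℝ) := by
      push_cast [Nat.cast_sub hk']
      ring
    rw [this]
    push_cast
    ring
  rw [heval, ← Nat.cast_mul, ← Nat.cast_mul, hnat]
  push_cast
  ring





/-- for natural numbers `m < n` and `β`,
`(n+m+β+1)! * ∫_0^1 x^(m+β) * P_n^{(0,β)}(2x-1) dx
  = ∑_{k=0}^n (-1)^k choose (n+β) k * choose n k * k! * (n+m+β-k)!`,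
and in particular the integral vanishes. Here
`P_n^{(0,β)}(2x-1) = ∑_{k=0}^n (-1)^(n-k) choose n k * choose (n+β+k) n * x^k`. -/
theorem jacobi_moment_integral (m n β : ℕ) (h : m < n) :
    (((n + m + β + 1).factorial : ℝ) *
        ∫ x in (0 : ℝ)..1, x ^ (m + β) *
          (∑ k ∈ Finset.range (n + 1),
            (-1 : ℝ) ^ (n - k) * (n.choose k : ℝ) * ((n + β + k).choose n : ℝ) * x ^ k)) =
      (∑ k ∈ Finset.range (n + 1),
        (-1 : ℝ) ^ k * ((n + β).choose k : ℝ) * (n.choose k : ℝ) *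
          (k.factorial : ℝ) * ((n + m + β - k).factorial : ℝ)) ∧
    (∫ x in (0 : ℝ)..1, x ^ (m + β) *
        (∑ k ∈ Finset.range (n + 1),
          (-1 : ℝ) ^ (n - k) * (n.choose k : ℝ) * ((n + β + k).choose n : ℝ) * x ^ k)) = 0 := by
  have key : ∀ (c : ℝ) (N : ℕ), (∫ x in (0:ℝ)..1, x ^ (m + β) * (c * x ^ N))
      = c / (((m + β + N : ℕ) : ℝ) + 1) := by
    intro c N
    have hp : ∀ x : ℝ, x ^ (m + β) * (c * x ^ N) = c * x ^ (m + β + N) := fun x => by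
      rw [pow_add]; ring
    simp only [hp]
    rw [intervalIntegral.integral_const_mul, integral_pow]
    push_cast
    norm_num
    ring
  have hsplit : (∫ x in (0 : ℝ)..1, x ^ (m + β) *
        (∑ k ∈ Finset.range (n + 1),
          (-1 : ℝ) ^ (n - k) * (n.choose k : ℝ) * ((n + β + k).choose n : ℝ) * x ^ k))
      = ∑ k ∈ Finset.range (n + 1), ∫ x in (0 : ℝ)..1, x ^ (m + β) *
          ((-1 : ℝ) ^ (n - k) * (n.choose k : ℝ) * ((n + β + k).choose n : ℝ) * x ^ k) := by
    rw [← intervalIntegral.integral_finset_sum]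
    · apply intervalIntegral.integral_congr
      intro x _
      simp only [Finset.mul_sum]
    · intro k _
      apply Continuous.intervalIntegrable
      continuity
  have hI0 : (∫ x in (0 : ℝ)..1, x ^ (m + β) *
        (∑ k ∈ Finset.range (n + 1),
          (-1 : ℝ) ^ (n - k) * (n.choose k : ℝ) * ((n + β + k).choose n : ℝ) * x ^ k)) = 0 := by
    rw [hsplit]
    have hterm : ∀ k ∈ Finset.range (n + 1),
        (∫ x in (0 : ℝ)..1, x ^ (m + β) *
          ((-1 : ℝ) ^ (n - k) * (n.choose k : ℝ) * ((n + β + k).choose n : ℝ) * x ^ k))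
        = (-1 : ℝ) ^ (n - k) * (n.choose k : ℝ) * (Pja m n β).eval (k : ℝ) := by
      intro k _
      rw [key ((-1 : ℝ) ^ (n - k) * (n.choose k : ℝ) * ((n + β + k).choose n : ℝ)) k]
      have hD : (((m + β + k : ℕ) : ℝ) + 1) ≠ 0 := by positivity
      rw [Pja_eval m n β h k]
      field_simp
    rw [Finset.sum_congr rfl hterm]
    exact alt_sum_eval_eq_zero n _ (Pja_natDegree_lt m n β h)
  have hS : (∑ k ∈ Finset.range (n + 1),
      (-1 : ℝ) ^ k * ((n + β).choose k : ℝ) * (n.choose k : ℝ) *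
        (k.factorial : ℝ) * ((n + m + β - k).factorial : ℝ)) = 0 := by
    have h1 : ∀ k ∈ Finset.range (n + 1),
        (-1 : ℝ) ^ k * ((n + β).choose k : ℝ) * (n.choose k : ℝ) *
          (k.factorial : ℝ) * ((n + m + β - k).factorial : ℝ)
        = (-1 : ℝ) ^ n * ((-1 : ℝ) ^ (n - k) * (n.choose k : ℝ) * (Qja m n β).eval (k : ℝ)) := by
      intro k hk
      have hk' : k ≤ n := by
        have := Finset.mem_range.mp hk; omega
      rw [← Qja_eval m n β h k hk']
      have hsign : (-1 : ℝ) ^ k = (-1 : ℝ) ^ n * (-1 : ℝ) ^ (n - k) := by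
        rw [← pow_add, show n + (n - k) = k + 2 * (n - k) by omega, pow_add, pow_mul,
          neg_one_sq, one_pow, mul_one]
      rw [hsign]
      ring
    rw [Finset.sum_congr rfl h1, ← Finset.mul_sum,
      alt_sum_eval_eq_zero n _ (Qja_natDegree_lt m n β h), mul_zero]
  exact ⟨by rw [hI0, hS, mul_zero], hI0⟩

end main
end

section
/- For natural numbers alpha, beta, n, the polynomial identity (x-1)^alpha * P_n^{(alpha,beta)}(2x-1) = sum_{i=0}^alpha binom(alpha,i) * (-1)^i * x^(alpha-i) * P_n^{(0,alpha+beta-i)}(2x-1) holds. -/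
/-- The shifted Jacobi polynomial `P_n^{(α,β)}(2x-1)` with natural number parameters,
given by `∑_{j=0}^n choose (n+α+β+j) j * choose (n+α) (n-j) * (x-1)^j`
(note `((2x-1)-1)/2 = x-1`). -/
noncomputable def shiftedJacobi (n α β : ℕ) (x : ℚ) : ℚ :=
  ∑ j ∈ Finset.range (n + 1),
    ((n + α + β + j).choose j * (n + α).choose (n - j) : ℚ) * (x - 1) ^ j

private lemma h1lem (n α β : ℕ) (x : ℚ) :
    shiftedJacobi n (α+1) β x - shiftedJacobi n α (β+1) x =
      ∑ j ∈ Finset.range n,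
        ((n+α+β+1+j).choose j * (n+α).choose (n-1-j) : ℚ) * (x-1)^j := by
  unfold shiftedJacobi
  rw [← Finset.sum_sub_distrib, Finset.sum_range_succ]
  have hz : ((n + (α+1) + β + n).choose n * (n + (α+1)).choose (n - n) : ℚ) * (x-1)^n -
      ((n + α + (β+1) + n).choose n * (n + α).choose (n - n) : ℚ) * (x-1)^n = 0 := by
    have e : n + (α+1) + β + n = n + α + (β+1) + n := by ring
    rw [e, Nat.sub_self]
    simp
  rw [hz, add_zero]
  refine Finset.sum_congr rfl fun j hj => ?_
  have hj' : j < n := Finset.mem_range.mp hj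
  have e1 : n + (α+1) + β + j = n + α + β + 1 + j := by ring
  have e2 : n + α + (β+1) + j = n + α + β + 1 + j := by ring
  have e3 : n - j = (n - 1 - j) + 1 := by omega
  have e4 : n + (α+1) = (n + α) + 1 := by ring
  rw [e1, e2, e3, e4, Nat.choose_succ_succ]
  push_cast; ring

private lemma h2lem (n α β : ℕ) (x : ℚ) :
    shiftedJacobi n α (β+1) x - shiftedJacobi n α β x =
      (x - 1) * ∑ j ∈ Finset.range n,
        ((n+α+β+1+j).choose j * (n+α).choose (n-1-j) : ℚ) * (x-1)^j := by
  unfold shiftedJacobi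
  rw [← Finset.sum_sub_distrib, Finset.sum_range_succ', Finset.mul_sum]
  have hz : ((n + α + (β+1) + 0).choose 0 * (n + α).choose (n - 0) : ℚ) * (x-1)^0 -
      ((n + α + β + 0).choose 0 * (n + α).choose (n - 0) : ℚ) * (x-1)^0 = 0 := by
    simp
  rw [hz, add_zero]
  refine Finset.sum_congr rfl fun j hj => ?_
  have e1 : n + α + (β+1) + (j+1) = (n + α + β + 1 + j) + 1 := by ring
  have e2 : n + α + β + (j+1) = n + α + β + 1 + j := by ring
  have e3 : n - (j+1) = n - 1 - j := by omega
  rw [e1, e2, e3, Nat.choose_succ_succ]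
  push_cast; ring

private lemma key (n α β : ℕ) (x : ℚ) :
    (x - 1) * shiftedJacobi n (α+1) β x
      = x * shiftedJacobi n α (β+1) x - shiftedJacobi n α β x := by
  linear_combination (x-1) * h1lem n α β x - h2lem n α β x

private lemma sum_step (n α β : ℕ) (x : ℚ) :
    x * (∑ i ∈ Finset.range (α+1),
          (α.choose i : ℚ) * (-1)^i * x^(α-i) * shiftedJacobi n 0 (α+(β+1)-i) x)
      - ∑ i ∈ Finset.range (α+1),
          (α.choose i : ℚ) * (-1)^i * x^(α-i) * shiftedJacobi n 0 (α+β-i) x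
    = ∑ i ∈ Finset.range (α+1+1),
        ((α+1).choose i : ℚ) * (-1)^i * x^(α+1-i) * shiftedJacobi n 0 (α+1+β-i) x := by
  rw [Finset.mul_sum]
  have hL : ∑ i ∈ Finset.range (α+1),
      x * ((α.choose i : ℚ) * (-1)^i * x^(α-i) * shiftedJacobi n 0 (α+(β+1)-i) x)
      = ∑ i ∈ Finset.range (α+1),
      (α.choose i : ℚ) * (-1)^i * x^(α+1-i) * shiftedJacobi n 0 (α+1+β-i) x := by
    refine Finset.sum_congr rfl fun i hi => ?_
    have hi' : i < α + 1 := Finset.mem_range.mp hi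
    have e1 : α + (β+1) - i = α+1+β-i := by omega
    have e2 : α + 1 - i = (α - i) + 1 := by omega
    rw [e1, e2, pow_succ]; ring
  rw [hL]
  rw [Finset.sum_range_succ' _ (α+1)]
  -- RHS = (∑ i < α+1, f (i+1)) + f 0
  have hf : ∑ i ∈ Finset.range (α+1),
      ((α+1).choose (i+1) : ℚ) * (-1)^(i+1) * x^(α+1-(i+1)) * shiftedJacobi n 0 (α+1+β-(i+1)) x
      = ∑ i ∈ Finset.range (α+1),
        (((α.choose i : ℚ) + (α.choose (i+1) : ℚ)) * (-1)^(i+1) * x^(α-i)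
          * shiftedJacobi n 0 (α+β-i) x) := by
    refine Finset.sum_congr rfl fun i hi => ?_
    have e1 : α + 1 - (i+1) = α - i := by omega
    have e2 : α + 1 + β - (i+1) = α + β - i := by omega
    rw [e1, e2, Nat.choose_succ_succ]
    push_cast; ring
  rw [hf]
  have hsplit : ∑ i ∈ Finset.range (α+1),
      (((α.choose i : ℚ) + (α.choose (i+1) : ℚ)) * (-1)^(i+1) * x^(α-i)
        * shiftedJacobi n 0 (α+β-i) x)
      = (∑ i ∈ Finset.range (α+1),
          (α.choose (i+1) : ℚ) * (-1)^(i+1) * x^(α-i) * shiftedJacobi n 0 (α+β-i) x)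
        - ∑ i ∈ Finset.range (α+1),
          (α.choose i : ℚ) * (-1)^i * x^(α-i) * shiftedJacobi n 0 (α+β-i) x := by
    rw [← Finset.sum_sub_distrib]
    refine Finset.sum_congr rfl fun i hi => ?_
    ring
  rw [hsplit]
  -- remains: ∑ g = (∑ C(α,i+1)...) + f 0
  rw [Finset.sum_range_succ' (fun i => (α.choose i : ℚ) * (-1)^i * x^(α+1-i) * shiftedJacobi n 0 (α+1+β-i) x) α]
  rw [Finset.sum_range_succ (fun i => (α.choose (i+1) : ℚ) * (-1)^(i+1) * x^(α-i) * shiftedJacobi n 0 (α+β-i) x) α]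
  have hlast : ((α.choose (α+1) : ℚ)) * (-1)^(α+1) * x^(α-α) * shiftedJacobi n 0 (α+β-α) x = 0 := by
    rw [Nat.choose_succ_self]; push_cast; ring
  rw [hlast]
  have hmid : ∑ i ∈ Finset.range α,
      (α.choose (i+1) : ℚ) * (-1)^(i+1) * x^(α+1-(i+1)) * shiftedJacobi n 0 (α+1+β-(i+1)) x
      = ∑ i ∈ Finset.range α,
      (α.choose (i+1) : ℚ) * (-1)^(i+1) * x^(α-i) * shiftedJacobi n 0 (α+β-i) x := by
    refine Finset.sum_congr rfl fun i hi => ?_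
    have e1 : α + 1 - (i+1) = α - i := by omega
    have e2 : α + 1 + β - (i+1) = α + β - i := by omega
    rw [e1, e2]
  rw [hmid]
  have hzero : ((α.choose 0 : ℚ)) * (-1)^(0:ℕ) * x^(α+1-0) * shiftedJacobi n 0 (α+1+β-0) x
      = ((α+1).choose 0 : ℚ) * (-1)^(0:ℕ) * x^(α+1-0) * shiftedJacobi n 0 (α+1+β-0) x := by
    simp
  rw [hzero]
  ring

/-- for natural numbers `α, β, n`,
`(x-1)^α * P_n^{(α,β)}(2x-1)
  = ∑_{i=0}^α choose α i * (-1)^i * x^(α-i) * P_n^{(0,α+β-i)}(2x-1)`. -/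
theorem shifted_jacobi_decomposition (n α β : ℕ) (x : ℚ) :
    (x - 1) ^ α * shiftedJacobi n α β x =
      ∑ i ∈ Finset.range (α + 1),
        (α.choose i : ℚ) * (-1) ^ i * x ^ (α - i) * shiftedJacobi n 0 (α + β - i) x := by
  induction α generalizing β with
  | zero => simp
  | succ α ih =>
    have hkey := key n α β x
    have h1 : (x-1)^(α+1) * shiftedJacobi n (α+1) β x
        = x * ((x-1)^α * shiftedJacobi n α (β+1) x)
          - (x-1)^α * shiftedJacobi n α β x := by
      rw [pow_succ]; linear_combination (x-1)^α * hkey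
    rw [h1, ih (β+1), ih β]
    exact sum_step n α β x
end
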